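/- arXiv:0708.4230 — 2 statements merged into one kernel-verified Lean document; each statement's English description precedes it below -/
import Mathlib

section
/- The image of the K-algebra homomorphism θ : K[X₁,X₂,X₃,X₄] → K[s,u,t,v] sending X₁,X₂,X₃,X₄ to st, sv, ut, uv respectively equals the subalgebra generated by the monomials of bidegree (1,1), and K[X₂,X₃,X₄] ∩ ker(θ) = 0. -/
open MvPolynomial

lemma range_vec4 {α : Type*} (a b c d : α) :
    Set.range ![a, b, c, d] = {a, b, c, d} := by
  ext x
  constructor
  · rintro ⟨i, rfl⟩
    fin_cases i <;> simp
  · rintro (rfl | rfl | rfl | rfl)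
    exacts [⟨0, rfl⟩, ⟨1, rfl⟩, ⟨2, rfl⟩, ⟨3, rfl⟩]

/-- In `K[s,u,t,v] = MvPolynomial (Fin 4) K` we use s = X 0, u = X 1, t = X 2, v = X 3;
θ sends X₁,X₂,X₃,X₄ to st, sv, ut, uv. Its image is the subalgebra generated by the
bidegree (1,1) monomials st, sv, ut, uv, and K[X₂,X₃,X₄] ∩ ker θ = 0. -/
theorem segre_image_and_no_kernel_in_three_vars (K : Type*) [Field K] :
    (MvPolynomial.aeval
        ![(X 0 : MvPolynomial (Fin 4) K) * X 2, X 0 * X 3, X 1 * X 2, X 1 * X 3] :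
        MvPolynomial (Fin 4) K →ₐ[K] MvPolynomial (Fin 4) K).range =
      Algebra.adjoin K ({X 0 * X 2, X 0 * X 3, X 1 * X 2, X 1 * X 3} :
        Set (MvPolynomial (Fin 4) K)) ∧
    ∀ P ∈ MvPolynomial.supported K ({1, 2, 3} : Set (Fin 4)),
      MvPolynomial.aeval
        ![(X 0 : MvPolynomial (Fin 4) K) * X 2, X 0 * X 3, X 1 * X 2, X 1 * X 3] P = 0 →
      P = 0 := by
  constructor
  · rw [← Algebra.adjoin_range_eq_range_aeval, range_vec4]
  · intro P hP hθ
    let F := FractionRing (MvPolynomial (Fin 4) K)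
    let ι : MvPolynomial (Fin 4) K →ₐ[K] F := IsScalarTower.toAlgHom K _ F
    have hι : Function.Injective ι := IsFractionRing.injective (MvPolynomial (Fin 4) K) F
    have hX3 : ι (X 3) ≠ 0 := by
      intro h
      exact (X_ne_zero (R := K) (3 : Fin 4)) (hι (by simpa using h))
    let ψ : MvPolynomial (Fin 4) K →ₐ[K] F :=
      MvPolynomial.aeval ![ι (X 1) / ι (X 3), 1, ι (X 2), ι (X 3)]
    have hP' : P ∈ Algebra.adjoin K (X '' ({1, 2, 3} : Set (Fin 4)) :
        Set (MvPolynomial (Fin 4) K)) := hP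
    have key : ψ (MvPolynomial.aeval
        ![(X 0 : MvPolynomial (Fin 4) K) * X 2, X 0 * X 3, X 1 * X 2, X 1 * X 3] P) = ι P := by
      clear hθ hP
      induction hP' using Algebra.adjoin_induction with
      | mem x hx =>
        obtain ⟨i, hi, rfl⟩ := hx
        rcases hi with rfl | rfl | rfl <;>
          simp [ψ, Matrix.cons_val_one, Matrix.cons_val_zero, Matrix.head_cons,
            div_mul_cancel₀ _ hX3]
      | algebraMap r => simp [ψ]
      | add x y _ _ hx hy => simp only [map_add, hx, hy]
      | mul x y _ _ hx hy => simp only [map_mul, hx, hy]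
    apply hι
    rw [← key, hθ]
    simp
end

section
/- Let R be a commutative ring and α : R^m → R^n an R-linear map with m ≥ n. Then ann_R(coker α)^n ⊆ I_n(α) ⊆ ann_R(coker α), where I_n(α) is the ideal generated by the n×n minors of a matrix of α. -/
open Matrix

/-- A product expansion lemma: `I ^ k ≤ J` follows if all `k`-fold products of
elements of `I` lie in `J`. -/
lemma pow_le_of_prod_mem {R : Type*} [CommRing R] (I : Ideal R) (k : ℕ) :
    ∀ (J : Ideal R), (∀ a : Fin k → R, (∀ i, a i ∈ I) → (∏ i, a i) ∈ J) → I ^ k ≤ J := by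
  induction k with
  | zero =>
    intro J h
    have h1 : (1 : R) ∈ J := by simpa using h (fun i => i.elim0) (fun i => i.elim0)
    rw [pow_zero, Ideal.one_eq_top]
    exact fun x _ => by simpa using J.mul_mem_left x h1
  | succ k ih =>
    intro J h
    rw [pow_succ, mul_comm]
    refine Ideal.mul_le.mpr fun r hr s hs => ?_
    have := ih (Submodule.comap (LinearMap.mulLeft R r) J : Ideal R) (fun a ha => by
      have := h (Fin.cons r a) (fun i => by
        refine Fin.cases ?_ ?_ i <;> simp [hr, ha])
      simpa [Fin.prod_cons] using this)
    exact this hs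

/-- Every submatrix determinant obtained by choosing `n` of the `m` columns (as an
arbitrary function, not necessarily injective) lies in the ideal of minors. -/
lemma det_submatrix_mem_minors {R : Type*} [CommRing R] {m n : ℕ}
    (M : Matrix (Fin n) (Fin m) R) (f : Fin n → Fin m) :
    (M.submatrix id f).det ∈
      Ideal.span { d : R | ∃ g : Fin n ↪ Fin m, d = (M.submatrix id g).det } := by
  by_cases hf : Function.Injective f
  · exact Ideal.subset_span ⟨⟨f, hf⟩, rfl⟩
  · obtain ⟨i, j, hij, hne⟩ : ∃ i j, f i = f j ∧ i ≠ j := by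
      simp only [Function.Injective, not_forall] at hf
      obtain ⟨i, j, h1, h2⟩ := hf
      exact ⟨i, j, h1, h2⟩
    have : (M.submatrix id f).det = 0 := by
      rw [← Matrix.det_transpose]
      exact Matrix.det_zero_of_row_eq hne (by
        ext k; simp [Matrix.transpose_apply, hij])
    rw [this]; exact Ideal.zero_mem _

/-- Multilinear expansion of `det (M * X)` over the columns of `M`. -/
lemma det_mul_expand {R : Type*} [CommRing R] {m n : ℕ}
    (M : Matrix (Fin n) (Fin m) R) (X : Matrix (Fin m) (Fin n) R) :
    (M * X).det =
      ∑ f : Fin n → Fin m, (∏ i, X (f i) i) * (M.submatrix id f).det := by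
  rw [← Matrix.det_transpose, Matrix.transpose_mul]
  have h1 : (Xᵀ * Mᵀ : Matrix (Fin n) (Fin n) R).det
      = Matrix.detRowAlternating (fun i => ∑ k : Fin m, X k i • Mᵀ k) := by
    congr 1
    ext i j
    simp [Matrix.mul_apply, Matrix.transpose_apply, mul_comm]
  rw [h1]
  have h2 := (Matrix.detRowAlternating (R := R) (n := Fin n)).toMultilinearMap.map_sum
    (α := fun _ : Fin n => Fin m) (g := fun i k => X k i • Mᵀ k)
  simp only [AlternatingMap.coe_multilinearMap] at h2
  rw [h2]
  refine Finset.sum_congr rfl fun f _ => ?_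
  have h3 := (Matrix.detRowAlternating (R := R) (n := Fin n)).toMultilinearMap.map_smul_univ
    (fun i => X (f i) i) (fun i => Mᵀ (f i))
  simp only [AlternatingMap.coe_multilinearMap] at h3
  rw [h3, smul_eq_mul]
  congr 1
  have : (fun i => Mᵀ (f i)) = (M.submatrix id f)ᵀ := by
    ext i j; simp [Matrix.transpose_apply]
  rw [show Matrix.detRowAlternating (fun i => Mᵀ (f i)) = Matrix.det (fun i => Mᵀ (f i)) from rfl,
    show (fun i => Mᵀ (f i)) = ((M.submatrix id f)ᵀ : Matrix (Fin n) (Fin n) R) from this,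
    Matrix.det_transpose]

/-- Cauchy–Binet style membership: `det (M * X)` lies in the ideal of `n × n` minors. -/
lemma det_mul_mem_minors {R : Type*} [CommRing R] {m n : ℕ}
    (M : Matrix (Fin n) (Fin m) R) (X : Matrix (Fin m) (Fin n) R) :
    (M * X).det ∈
      Ideal.span { d : R | ∃ g : Fin n ↪ Fin m, d = (M.submatrix id g).det } := by
  rw [det_mul_expand]
  exact Ideal.sum_mem _ fun f _ =>
    Ideal.mul_mem_left _ _ (det_submatrix_mem_minors M f)

/-- Let α : R^m → R^n (m ≥ n) be given by a matrix M.  Then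
ann(coker α)^n ⊆ I_n(α) ⊆ ann(coker α), where I_n(α) is the ideal generated by the
n×n minors of M (determinants of the submatrices obtained by choosing n of the m
columns). -/
theorem fitting_ideal_bounds (R : Type*) [CommRing R] (m n : ℕ) (hmn : n ≤ m)
    (M : Matrix (Fin n) (Fin m) R) :
    let α : (Fin m → R) →ₗ[R] (Fin n → R) := Matrix.mulVecLin M
    let ann : Ideal R := Module.annihilator R ((Fin n → R) ⧸ LinearMap.range α)
    let minors : Ideal R :=
      Ideal.span { d : R | ∃ g : Fin n ↪ Fin m, d = (M.submatrix id g).det }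
    ann ^ n ≤ minors ∧ minors ≤ ann := by
  intro α ann minors
  constructor
  · refine pow_le_of_prod_mem ann n minors fun a ha => ?_
    have hmem : ∀ i : Fin n, a i • (Pi.single i 1 : Fin n → R) ∈ LinearMap.range α := by
      intro i
      have h0 := Module.mem_annihilator.mp (ha i)
        (Submodule.Quotient.mk (Pi.single i 1 : Fin n → R))
      rw [← Submodule.Quotient.mk_smul, Submodule.Quotient.mk_eq_zero] at h0
      exact h0
    choose x hx using fun i => (hmem i)
    set X : Matrix (Fin m) (Fin n) R := Matrix.of fun k i => x i k with hX
    have hMX : M * X = Matrix.diagonal a := by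
      ext i j
      have hxj : M.mulVec (x j) = a j • (Pi.single j 1 : Fin n → R) := hx j
      simp only [Matrix.mul_apply, hX, Matrix.of_apply, Matrix.diagonal_apply]
      rw [show ∑ k, M i k * x j k = M.mulVec (x j) i from rfl, congrFun hxj i]
      simp [Pi.single_apply, eq_comm]
      split <;> simp_all
    have : (∏ i, a i) = (M * X).det := by rw [hMX, Matrix.det_diagonal]
    rw [this]
    exact det_mul_mem_minors M X
  · rw [Ideal.span_le]
    rintro d ⟨g, rfl⟩
    refine Module.mem_annihilator.mpr fun z => ?_
    obtain ⟨v, rfl⟩ := Submodule.Quotient.mk_surjective _ z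
    rw [← Submodule.Quotient.mk_smul, Submodule.Quotient.mk_eq_zero]
    set A : Matrix (Fin n) (Fin n) R := M.submatrix id g with hA
    set y : Fin n → R := A.adjugate.mulVec v with hy
    refine ⟨fun k => ∑ i, if g i = k then y i else 0, ?_⟩
    have h1 : M.mulVec (fun k => ∑ i, if g i = k then y i else 0) = A.mulVec y := by
      ext j
      simp only [Matrix.mulVec, dotProduct, Finset.mul_sum, mul_ite, mul_zero]
      rw [Finset.sum_comm]
      refine Finset.sum_congr rfl fun i _ => ?_
      simp [hA, Matrix.submatrix_apply]
    have h2 : A.mulVec y = A.det • v := by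
      rw [hy, Matrix.mulVec_mulVec, Matrix.mul_adjugate, Matrix.smul_mulVec,
        Matrix.one_mulVec]
    exact h1.trans h2
end
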